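/- For every integer k' ≥ 2 there exist a finite connected simple graph G and distinct vertices s_1, s_2, …, s_{2k'} of G with s_m adjacent to s_{m+1} for all 1 ≤ m < 2k' and s_{2k'} adjacent to s_1 (so that s_1, …, s_{2k'} form a cycle of length k = 2k' in G), such that the number of distinct patterns, i.e., the cardinality of the set { p_v : v a vertex of G } where p_v = ⟨d(v,s_2)−d(v,s_1), d(v,s_3)−d(v,s_2), …, d(v,s_{2k'})−d(v,s_{2k'−1})⟩, is at least k'(k'−1)/2. -/

import Mathlib

open Finset Function

/-- The hypercube graph on `Fin n → Bool`. -/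
def cube (n : ℕ) : SimpleGraph (Fin n → Bool) where
  Adj u v := hammingDist u v = 1
  symm := ⟨fun u v h => by show hammingDist v u = 1; rwa [hammingDist_comm]⟩
  loopless := ⟨fun u h => by simp only [hammingDist_self] at h; exact absurd h (by omega)⟩

lemma cube_filter_eq {n : ℕ} {u v : Fin n → Bool} {c : Fin n}
    (h : ∀ i, u i ≠ v i ↔ i = c) :
    ({i | u i ≠ v i} : Finset (Fin n)) = {c} := by
  ext i
  simp only [Finset.mem_filter, Finset.mem_univ, true_and, Finset.mem_singleton]
  exact h i

lemma cube_ham_eq_one {n : ℕ} {u v : Fin n → Bool} {c : Fin n}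
    (h : ∀ i, u i ≠ v i ↔ i = c) : hammingDist u v = 1 := by
  unfold hammingDist
  rw [cube_filter_eq h]
  simp

lemma cube_exists_walk (n : ℕ) : ∀ (d : ℕ) (u v : Fin n → Bool),
    hammingDist u v = d → ∃ p : (cube n).Walk u v, p.length = d := by
  intro d
  induction d with
  | zero =>
    intro u v h
    obtain rfl := eq_of_hammingDist_eq_zero h
    exact ⟨.nil, rfl⟩
  | succ d ih =>
    intro u v h
    have hne : u ≠ v := by
      intro e; subst e; simp [hammingDist_self] at h
    obtain ⟨j, hj⟩ : ∃ j, u j ≠ v j := Function.ne_iff.mp hne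
    set u' := Function.update u j (v j) with hu'
    have hadj : (cube n).Adj u u' := by
      apply cube_ham_eq_one (c := j)
      intro i
      rcases eq_or_ne i j with rfl | hij
      · simp [hu', Function.update_self, hj]
      · simp [hu', Function.update_of_ne hij, hij]
    have hham : hammingDist u' v = d := by
      have hset : ({i | u' i ≠ v i} : Finset (Fin n))
          = ({i | u i ≠ v i} : Finset (Fin n)).erase j := by
        ext i
        simp only [Finset.mem_filter, Finset.mem_univ, true_and, Finset.mem_erase]
        rcases eq_or_ne i j with rfl | hij
        · simp [hu', Function.update_self]
        · simp [hu', Function.update_of_ne hij, hij]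
      have hmem : j ∈ ({i | u i ≠ v i} : Finset (Fin n)) := by
        simp [hj]
      have := Finset.card_erase_of_mem hmem
      unfold hammingDist at h ⊢
      rw [hset, this, h]
      omega
    obtain ⟨p, hp⟩ := ih u' v hham
    exact ⟨.cons hadj p, by simp [hp]⟩

lemma cube_ham_le_length {n : ℕ} {u v : Fin n → Bool} (p : (cube n).Walk u v) :
    hammingDist u v ≤ p.length := by
  induction p with
  | nil => simp [hammingDist_self]
  | @cons a b c h p ih =>
    calc hammingDist a c ≤ hammingDist a b + hammingDist b c := hammingDist_triangle _ _ _
      _ ≤ 1 + p.length := by have : hammingDist a b = 1 := h; omega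
      _ = (SimpleGraph.Walk.cons h p).length := by simp [Nat.add_comm]

lemma cube_reachable {n : ℕ} (u v : Fin n → Bool) : (cube n).Reachable u v :=
  ⟨(cube_exists_walk n _ u v rfl).choose⟩

lemma cube_connected (n : ℕ) : (cube n).Connected :=
  (SimpleGraph.connected_iff (cube n)).mpr ⟨fun u v => cube_reachable u v, ⟨fun _ => false⟩⟩

lemma cube_dist {n : ℕ} (u v : Fin n → Bool) : (cube n).dist u v = hammingDist u v := by
  apply le_antisymm
  · obtain ⟨p, hp⟩ := cube_exists_walk n _ u v rfl
    exact hp ▸ SimpleGraph.dist_le p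
  · obtain ⟨p, hp⟩ := (cube_reachable u v).exists_walk_length_eq_dist
    exact hp ▸ cube_ham_le_length p

/-- If `u` and `u'` differ exactly at coordinate `c`, the hamming distance from any `v`
changes by `±1` depending on `v c`. -/
lemma cube_ham_flip {n : ℕ} {u u' : Fin n → Bool} {c : Fin n}
    (h : ∀ i, u i ≠ u' i ↔ i = c) (v : Fin n → Bool) :
    (hammingDist v u' : ℤ) - hammingDist v u = if v c = u c then 1 else -1 := by
  have hc : u c ≠ u' c := (h c).mpr rfl
  have heq : ∀ i, i ≠ c → u i = u' i := by
    intro i hi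
    by_contra hne
    exact hi ((h i).mp hne)
  by_cases hvc : v c = u c
  · rw [if_pos hvc]
    have e1 : hammingDist v u' = hammingDist v u + 1 := by
      unfold hammingDist
      have hset : ({i | v i ≠ u' i} : Finset (Fin n))
          = insert c ({i | v i ≠ u i} : Finset (Fin n)) := by
        ext i
        simp only [Finset.mem_filter, Finset.mem_univ, true_and, Finset.mem_insert]
        rcases eq_or_ne i c with rfl | hic
        · simp [hvc ▸ hc]
        · simp [heq i hic, hic]
      have hnotmem : c ∉ ({i | v i ≠ u i} : Finset (Fin n)) := by
        simp [hvc]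
      rw [hset, Finset.card_insert_of_notMem hnotmem]
    rw [e1]; push_cast; ring
  · rw [if_neg hvc]
    have hvc' : v c = u' c := by
      revert hvc hc
      cases u c <;> cases v c <;> cases u' c <;> simp
    have e1 : hammingDist v u = hammingDist v u' + 1 := by
      unfold hammingDist
      have hset : ({i | v i ≠ u i} : Finset (Fin n))
          = insert c ({i | v i ≠ u' i} : Finset (Fin n)) := by
        ext i
        simp only [Finset.mem_filter, Finset.mem_univ, true_and, Finset.mem_insert]
        rcases eq_or_ne i c with rfl | hic
        · simp [hvc, hvc', Ne.symm hc]
        · simp [heq i hic, hic]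
      have hnotmem : c ∉ ({i | v i ≠ u' i} : Finset (Fin n)) := by
        simp [hvc']
      rw [hset, Finset.card_insert_of_notMem hnotmem]
    rw [e1]; push_cast; ring

/-- The cycle map on the hypercube. -/
def sfun (n j : ℕ) (i : Fin n) : Bool :=
  if j ≤ n then decide ((i : ℕ) < j) else decide (j - n ≤ (i : ℕ))

lemma sfun_step (n m : ℕ) (hm : m + 1 < 2 * n) (i : Fin n) :
    (sfun n m i ≠ sfun n (m + 1) i) ↔ (i : ℕ) = (if m < n then m else m - n) := by
  have hi := i.isLt
  unfold sfun
  split_ifs <;> simp only [ne_eq, decide_eq_decide] <;> omega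

lemma sfun_close (n : ℕ) (hn : 1 ≤ n) (i : Fin n) :
    (sfun n (2 * n - 1) i ≠ sfun n 0 i) ↔ (i : ℕ) = n - 1 := by
  have hi := i.isLt
  unfold sfun
  split_ifs <;> simp only [ne_eq, decide_eq_decide] <;> omega

lemma sfun_inj (n : ℕ) (hn : 2 ≤ n) : ∀ j1 j2 : ℕ, j1 < j2 → j2 < 2 * n →
    ∃ i : Fin n, sfun n j1 i ≠ sfun n j2 i := by
  intro j1 j2 h12 h2
  rcases le_or_gt j2 n with hj2 | hj2
  · exact ⟨⟨j1, by omega⟩, by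
      unfold sfun; split_ifs <;> simp only [ne_eq, decide_eq_decide, Fin.val_mk] <;> omega⟩
  · rcases lt_or_ge n j1 with hj1 | hj1
    · exact ⟨⟨j1 - n, by omega⟩, by
        unfold sfun; split_ifs <;> simp only [ne_eq, decide_eq_decide, Fin.val_mk] <;> omega⟩
    · rcases Nat.eq_zero_or_pos j1 with rfl | hpos
      · exact ⟨⟨n - 1, by omega⟩, by
          unfold sfun; split_ifs <;> simp only [ne_eq, decide_eq_decide, Fin.val_mk] <;> omega⟩
      · exact ⟨⟨0, by omega⟩, by
          unfold sfun; split_ifs <;> simp only [ne_eq, decide_eq_decide, Fin.val_mk] <;> omega⟩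

lemma choose_two_le_two_pow (n : ℕ) : n * (n - 1) / 2 ≤ 2 ^ n := by
  rw [← Nat.choose_two_right]
  calc n.choose 2 ≤ ∑ m ∈ Finset.range (n + 1), n.choose m := by
        rcases le_or_gt 2 n with h | h
        · exact Finset.single_le_sum (fun i _ => Nat.zero_le _)
            (Finset.mem_range.mpr (by omega))
        · interval_cases n <;> simp
    _ = 2 ^ n := Nat.sum_range_choose n

lemma ite_pm_one {A B : Prop} [Decidable A] [Decidable B]
    (h : (if A then (1:ℤ) else -1) = if B then (1:ℤ) else -1) : A ↔ B := by
  by_cases hA : A <;> by_cases hB : B <;> simp [hA, hB] at h ⊢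

/-- The coordinate flipped at step `i` of the cycle. -/
def coordOf (n : ℕ) (hn : 2 ≤ n) (i : Fin (2 * n - 1)) : Fin n :=
  ⟨if (i : ℕ) < n then (i : ℕ) else (i : ℕ) - n, by have := i.isLt; split_ifs <;> omega⟩

lemma cube_count (n : ℕ) (hn : 2 ≤ n) :
    n * (n - 1) / 2 ≤
      {p : Fin (2 * n - 1) → ℤ | ∃ v : Fin n → Bool, ∀ i : Fin (2 * n - 1),
        p i = ((cube n).dist v (sfun n ((i : ℕ) + 1)) : ℤ)
            - ((cube n).dist v (sfun n (i : ℕ)) : ℤ)}.ncard := by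
  classical
  let f : (Fin n → Bool) → (Fin (2 * n - 1) → ℤ) := fun v i =>
    ((cube n).dist v (sfun n ((i : ℕ) + 1)) : ℤ) - ((cube n).dist v (sfun n (i : ℕ)) : ℤ)
  have hform : ∀ (v : Fin n → Bool) (i : Fin (2 * n - 1)),
      f v i = if v (coordOf n hn i) = sfun n (i : ℕ) (coordOf n hn i) then 1 else -1 := by
    intro v i
    have hi := i.isLt
    show ((cube n).dist v (sfun n ((i : ℕ) + 1)) : ℤ)
        - ((cube n).dist v (sfun n (i : ℕ)) : ℤ) = _
    rw [cube_dist, cube_dist]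
    exact cube_ham_flip (fun j => by
      rw [sfun_step n (i : ℕ) (by omega) j]
      exact (Fin.ext_iff (a := j) (b := coordOf n hn i)).symm) v
  have hinj : Function.Injective f := by
    intro v w hvw
    funext c
    have hcn : (c : ℕ) < 2 * n - 1 := by have := c.isLt; omega
    have hc : coordOf n hn ⟨(c : ℕ), hcn⟩ = c := by
      apply Fin.ext
      simp [coordOf, c.isLt]
    have h2 : (if v (coordOf n hn ⟨(c : ℕ), hcn⟩)
          = sfun n (c : ℕ) (coordOf n hn ⟨(c : ℕ), hcn⟩) then (1:ℤ) else -1)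
        = if w (coordOf n hn ⟨(c : ℕ), hcn⟩)
          = sfun n (c : ℕ) (coordOf n hn ⟨(c : ℕ), hcn⟩) then (1:ℤ) else -1 := by
      rw [← hform v ⟨(c : ℕ), hcn⟩, ← hform w ⟨(c : ℕ), hcn⟩, congrFun hvw _]
    rw [hc] at h2
    have h3 := ite_pm_one h2
    revert h3
    cases v c <;> cases w c <;> cases sfun n (c : ℕ) c <;> simp
  have hsetrange : {p : Fin (2 * n - 1) → ℤ | ∃ v : Fin n → Bool,
      ∀ i : Fin (2 * n - 1),
        p i = ((cube n).dist v (sfun n ((i : ℕ) + 1)) : ℤ)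
            - ((cube n).dist v (sfun n (i : ℕ)) : ℤ)}
      = Set.range f := by
    ext p
    constructor
    · rintro ⟨v, hv⟩
      exact ⟨v, (funext fun i => (hv i).symm)⟩
    · rintro ⟨v, rfl⟩
      exact ⟨v, fun i => rfl⟩
  rw [hsetrange, ← Nat.card_coe_set_eq, Nat.card_range_of_injective hinj]
  have hcard : Nat.card (Fin n → Bool) = 2 ^ n := by
    simp [Nat.card_eq_fintype_card]
  rw [hcard]
  exact choose_two_le_two_pow n

/-- Lemma 11 of the paper: for every `k' ≥ 2` there is a finite connected graph
with a cycle `s_1, …, s_{2k'}` of length `k = 2k'` on which the number of distinct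
patterns is at least `k'(k'−1)/2 = Ω(k²)`. -/
theorem stmt_12 (k' : ℕ) (hk : 2 ≤ k') :
    ∃ (V : Type) (_ : Fintype V) (G : SimpleGraph V) (s : Fin (2 * k') → V),
      G.Connected ∧ Function.Injective s ∧
      (∀ m : ℕ, (hm : m + 1 < 2 * k') →
        G.Adj (s ⟨m, by omega⟩) (s ⟨m + 1, hm⟩)) ∧
      G.Adj (s ⟨2 * k' - 1, by omega⟩) (s ⟨0, by omega⟩) ∧
      k' * (k' - 1) / 2 ≤
        {p : Fin (2 * k' - 1) → ℤ | ∃ v : V, ∀ i : Fin (2 * k' - 1),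
          p i = (G.dist v (s ⟨(i : ℕ) + 1, by have := i.isLt; omega⟩) : ℤ)
              - (G.dist v (s ⟨(i : ℕ), by have := i.isLt; omega⟩) : ℤ)}.ncard := by
  refine ⟨Fin k' → Bool, inferInstance, cube k', fun j => sfun k' (j : ℕ), cube_connected k',
    ?_, ?_, ?_, ?_⟩
  · intro a b hab
    by_contra hne
    rcases Ne.lt_or_gt (fun h : (a : ℕ) = (b : ℕ) => hne (Fin.ext h)) with h | h
    · obtain ⟨i, hi⟩ := sfun_inj k' hk _ _ h b.isLt
      exact hi (congrFun hab i)
    · obtain ⟨i, hi⟩ := sfun_inj k' hk _ _ h a.isLt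
      exact hi (congrFun hab i).symm
  · intro m hm
    exact cube_ham_eq_one (c := ⟨if m < k' then m else m - k', by split_ifs <;> omega⟩)
      fun i => by rw [sfun_step k' m hm i, Fin.ext_iff]
  · exact cube_ham_eq_one (c := ⟨k' - 1, by omega⟩) fun i => by
      rw [sfun_close k' (by omega) i, Fin.ext_iff]
  · exact cube_count k' hk
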